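/- For positive integers n, w, r with w ≤ n and (a;b) ∈ F_2^n × F_2^n with w(a;b) = w, the number S_λ(n,w,r) of pairs (c;d) at asymmetric Lee distance exactly r from (a;b) equals Σ_{k,ℓ,m : (2k+ℓ)(1+λ)+λm = r} C(w,m)·C(n−w,k)·C(n−k−m,ℓ)·2^ℓ. -/

import Mathlib

open Finset

def ind (p : Prop) [Decidable p] : ℤ := if p then 1 else 0

def aldSym (lam : ℕ) (a b c d : Bool) : ℤ :=
  (1 + lam) * (ind (a = b) + ind (c = d))
    + lam * ind (a = !b ∧ !b = !c ∧ !c = d)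
    - 2 * (1 + lam) * ind (a = b ∧ b = c ∧ c = d)

def ALD (lam n : ℕ) (x y : (Fin n → Bool) × (Fin n → Bool)) : ℤ :=
  ∑ i, aldSym lam (x.1 i) (x.2 i) (y.1 i) (y.2 i)

def wt {n : ℕ} (a b : Fin n → Bool) : ℕ :=
  (Finset.univ.filter fun i => a i ≠ b i).card
open Polynomial

def cost (lam : ℕ) (a b c d : Bool) : ℕ :=
  if a = b then (if c = d then (if a = c then 0 else 2*(1+lam)) else (1+lam))
  else (if c = d then (1+lam) else (if a = c then 0 else lam))

lemma aldSym_eq_cost (lam : ℕ) (a b c d : Bool) :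
    aldSym lam a b c d = (cost lam a b c d : ℤ) := by
  cases a <;> cases b <;> cases c <;> cases d <;>
    simp [aldSym, cost, ind] <;> ring

lemma sum_cost_eq (lam : ℕ) (a b : Bool) (h : a = b) :
    ∑ v : Bool × Bool, (X : ℕ[X])^(cost lam a b v.1 v.2)
      = 1 + 2*X^(1+lam) + X^(2*(1+lam)) := by
  subst h
  cases a <;> simp [Fintype.sum_prod_type, cost] <;> ring

lemma sum_cost_ne (lam : ℕ) (a b : Bool) (h : a ≠ b) :
    ∑ v : Bool × Bool, (X : ℕ[X])^(cost lam a b v.1 v.2)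
      = 1 + X^lam + 2*X^(1+lam) := by
  cases a <;> cases b <;> simp_all [Fintype.sum_prod_type, cost] <;> ring

lemma card_eq_coeff (n r : ℕ) (g : Fin n → Bool × Bool → ℕ) :
    ((univ.filter fun z : Fin n → Bool × Bool => ∑ i, g i (z i) = r)).card
      = Polynomial.coeff (∏ i, ∑ v : Bool × Bool, (X : ℕ[X])^(g i v)) r := by
  rw [Finset.prod_univ_sum, Fintype.piFinset_univ, Polynomial.finset_sum_coeff,
    Finset.card_filter]
  congr 1
  ext z
  rw [Finset.prod_pow_eq_pow_sum, Polynomial.coeff_X_pow]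
  simp [eq_comm]

lemma expand2 (lam N : ℕ) : ((1:ℕ[X])+2*X^(1+lam))^N
    = ∑ l ∈ range (N+1), (2^l * (N.choose l) : ℕ[X]) * X^((1+lam)*l) := by
  rw [show ((1:ℕ[X])+2*X^(1+lam)) = 2*X^(1+lam) + 1 by ring, add_pow]
  refine Finset.sum_congr rfl fun l hl => ?_
  ring

lemma poly_id (lam n w : ℕ) (hw : w ≤ n) :
    ((1:ℕ[X]) + 2*X^(1+lam) + X^(2*(1+lam)))^(n-w) * (1 + X^lam + 2*X^(1+lam))^w
    = ∑ k ∈ range (n+1), ∑ l ∈ range (n+1), ∑ m ∈ range (n+1),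
        ((w.choose m * (n-w).choose k * (n-k-m).choose l * 2^l : ℕ) : ℕ[X])
          * X^((2*k+l)*(1+lam)+lam*m) := by
  have step1 : ((1:ℕ[X]) + 2*X^(1+lam) + X^(2*(1+lam)))^(n-w) * (1 + X^lam + 2*X^(1+lam))^w
      = ∑ k ∈ range (n-w+1), ∑ m ∈ range (w+1), ∑ l ∈ range (n-k-m+1),
          ((w.choose m * (n-w).choose k * (n-k-m).choose l * 2^l : ℕ) : ℕ[X])
            * X^((2*k+l)*(1+lam)+lam*m) := by
    rw [show ((1:ℕ[X]) + 2*X^(1+lam) + X^(2*(1+lam))) = X^(2*(1+lam)) + (1+2*X^(1+lam)) by ring,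
        add_pow,
        show ((1:ℕ[X]) + X^lam + 2*X^(1+lam)) = X^lam + (1+2*X^(1+lam)) by ring,
        add_pow, Finset.sum_mul_sum]
    refine Finset.sum_congr rfl fun k hk => Finset.sum_congr rfl fun m hm => ?_
    have hk' : k ≤ n - w := Finset.mem_range_succ_iff.mp hk
    have hm' : m ≤ w := Finset.mem_range_succ_iff.mp hm
    have hpow : ((1:ℕ[X])+2*X^(1+lam))^(n-w-k) * ((1:ℕ[X])+2*X^(1+lam))^(w-m)
        = ((1:ℕ[X])+2*X^(1+lam))^(n-k-m) := by
      rw [← pow_add]; congr 1; omega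
    rw [show (X^(2*(1+lam)))^k * ((1:ℕ[X])+2*X^(1+lam))^(n-w-k) * ((n-w).choose k : ℕ[X])
          * ((X^lam)^m * ((1:ℕ[X])+2*X^(1+lam))^(w-m) * (w.choose m : ℕ[X]))
        = ((n-w).choose k : ℕ[X]) * (w.choose m : ℕ[X]) * ((X^(2*(1+lam)))^k * (X^lam)^m)
          * (((1:ℕ[X])+2*X^(1+lam))^(n-w-k) * ((1:ℕ[X])+2*X^(1+lam))^(w-m)) by ring,
        hpow, expand2, Finset.mul_sum]
    refine Finset.sum_congr rfl fun l hl => ?_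
    push_cast
    ring
  rw [step1]
  rw [Finset.sum_subset (Finset.range_subset_range.mpr (by omega : n-w+1 ≤ n+1))
      (fun k _ hk => by
        have : n - w < k := by simpa using hk
        simp [Nat.choose_eq_zero_of_lt this])]
  refine Finset.sum_congr rfl fun k hk => ?_
  have hext : ∀ m ∈ Finset.range (n+1),
      (∑ l ∈ range (n-k-m+1),
          ((w.choose m * (n-w).choose k * (n-k-m).choose l * 2^l : ℕ) : ℕ[X])
            * X^((2*k+l)*(1+lam)+lam*m))
        = ∑ l ∈ range (n+1),
          ((w.choose m * (n-w).choose k * (n-k-m).choose l * 2^l : ℕ) : ℕ[X])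
            * X^((2*k+l)*(1+lam)+lam*m) := by
    intro m _
    refine Finset.sum_subset (Finset.range_subset_range.mpr (by omega : n-k-m+1 ≤ n+1))
      (fun l _ hl => by
        have : n - k - m < l := by simpa using hl
        simp [Nat.choose_eq_zero_of_lt this])
  rw [Finset.sum_subset (Finset.range_subset_range.mpr (by omega : w+1 ≤ n+1))
      (fun m _ hm => by
        have : w < m := by simpa using hm
        simp [Nat.choose_eq_zero_of_lt this])]
  rw [Finset.sum_congr rfl hext]
  exact Finset.sum_comm

theorem ald_sphere_size (lam n w r : ℕ) (hlam : 0 < lam) (hn : 0 < n) (hw : 0 < w)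
    (hr : 0 < r) (hwn : w ≤ n)
    (x : (Fin n → Bool) × (Fin n → Bool)) (hx : wt x.1 x.2 = w) :
    ((Finset.univ.filter fun y : (Fin n → Bool) × (Fin n → Bool) =>
        ALD lam n x y = (r : ℤ))).card =
      ∑ k ∈ Finset.range (n + 1), ∑ l ∈ Finset.range (n + 1),
        ∑ m ∈ Finset.range (n + 1),
          if (2 * k + l) * (1 + lam) + lam * m = r then
            w.choose m * (n - w).choose k * (n - k - m).choose l * 2 ^ l
          else 0 := by
  -- step 1: rewrite condition as a ℕ equation
  have hcond : ∀ y : (Fin n → Bool) × (Fin n → Bool),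
      (ALD lam n x y = (r : ℤ)) ↔ (∑ i, cost lam (x.1 i) (x.2 i) (y.1 i) (y.2 i) = r) := by
    intro y
    unfold ALD
    rw [Finset.sum_congr rfl (fun i _ => aldSym_eq_cost lam (x.1 i) (x.2 i) (y.1 i) (y.2 i)),
      ← Nat.cast_sum]
    exact Nat.cast_inj
  simp_rw [hcond]
  -- step 2: transport pairs of functions to functions into pairs
  have hcard : ((Finset.univ.filter fun y : (Fin n → Bool) × (Fin n → Bool) =>
        ∑ i, cost lam (x.1 i) (x.2 i) (y.1 i) (y.2 i) = r)).card
      = ((univ.filter fun z : Fin n → Bool × Bool =>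
        ∑ i, cost lam (x.1 i) (x.2 i) (z i).1 (z i).2 = r)).card := by
    apply Finset.card_nbij' (fun y => fun i => (y.1 i, y.2 i))
      (fun z => (fun i => (z i).1, fun i => (z i).2)) <;>
      simp [Finset.mem_filter, Set.MapsTo, Set.LeftInvOn, Set.RightInvOn, Set.EqOn]
  rw [hcard, card_eq_coeff n r (fun i v => cost lam (x.1 i) (x.2 i) v.1 v.2)]
  -- step 3: compute the product
  have hsplit : (∏ i, ∑ v : Bool × Bool, (X : ℕ[X])^(cost lam (x.1 i) (x.2 i) v.1 v.2))
      = ((1:ℕ[X]) + 2*X^(1+lam) + X^(2*(1+lam)))^(n-w) * (1 + X^lam + 2*X^(1+lam))^w := by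
    rw [← Finset.prod_filter_mul_prod_filter_not univ (fun i => x.1 i = x.2 i)]
    have h1 : ∀ i ∈ univ.filter (fun i => x.1 i = x.2 i),
        (∑ v : Bool × Bool, (X : ℕ[X])^(cost lam (x.1 i) (x.2 i) v.1 v.2))
          = 1 + 2*X^(1+lam) + X^(2*(1+lam)) := fun i hi =>
      sum_cost_eq lam _ _ (Finset.mem_filter.mp hi).2
    have h2 : ∀ i ∈ univ.filter (fun i => ¬ x.1 i = x.2 i),
        (∑ v : Bool × Bool, (X : ℕ[X])^(cost lam (x.1 i) (x.2 i) v.1 v.2))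
          = 1 + X^lam + 2*X^(1+lam) := fun i hi =>
      sum_cost_ne lam _ _ (Finset.mem_filter.mp hi).2
    rw [Finset.prod_congr rfl h1, Finset.prod_congr rfl h2, Finset.prod_const,
      Finset.prod_const]
    have hw2 : (univ.filter (fun i => ¬ x.1 i = x.2 i)).card = w := hx
    have hadd : (univ.filter (fun i => x.1 i = x.2 i)).card
        + (univ.filter (fun i => ¬ x.1 i = x.2 i)).card = n := by
      rw [Finset.card_filter_add_card_filter_not]
      simp
    have : (univ.filter (fun i => x.1 i = x.2 i)).card = n - w := by
      rw [hw2] at hadd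
      exact Nat.eq_sub_of_add_eq hadd
    exact congrArg₂ (· * ·)
      (congrArg (fun t => ((1:ℕ[X]) + 2*X^(1+lam) + X^(2*(1+lam)))^t) this)
      (congrArg (fun t => ((1:ℕ[X]) + X^lam + 2*X^(1+lam))^t) hw2)
  rw [hsplit, poly_id lam n w hwn]
  -- step 4: extract the coefficient
  rw [Polynomial.finset_sum_coeff]
  refine Finset.sum_congr rfl fun k _ => ?_
  rw [Polynomial.finset_sum_coeff]
  refine Finset.sum_congr rfl fun l _ => ?_
  rw [Polynomial.finset_sum_coeff]
  refine Finset.sum_congr rfl fun m _ => ?_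
  rw [← Polynomial.C_eq_natCast, Polynomial.coeff_C_mul, Polynomial.coeff_X_pow]
  simp only [eq_comm, mul_ite, mul_one, mul_zero, Nat.cast_id]
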